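/- Let N be a positive integer and ξ > 0. For k ∈ ℤ^N let H_k := ∏_{i=1}^N [2πk_i/ξ, 2π(k_i+1)/ξ] ⊆ ℝ^N. Let g : ℝ^N → ℝ be continuously differentiable and Lebesgue integrable, and assume that the family (sup_{x∈H_k} ‖∇g(x)‖)_{k∈ℤ^N} is summable and that the family (g(2πk/ξ))_{k∈ℤ^N} is summable. Then |(2π/ξ)^N Σ_{k∈ℤ^N} g(2πk/ξ) − ∫_{ℝ^N} g(x) dx| ≤ 2π (√N/ξ) Σ_{k∈ℤ^N} (2π/ξ)^N sup_{x∈H_k} ‖∇g(x)‖. -/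

import Mathlib

open MeasureTheory Filter Real

def cube (N : ℕ) (ξ : ℝ) (k : Fin N → ℤ) : Set (EuclideanSpace ℝ (Fin N)) :=
  {x | ∀ i, x i ∈ Set.Icc (2 * π * (k i : ℝ) / ξ) (2 * π * ((k i : ℝ) + 1) / ξ)}

lemma mem_Ico_iff_floor {ξ : ℝ} (hξ : 0 < ξ) (m : ℤ) (y : ℝ) :
    y ∈ Set.Ico (2 * π * (m : ℝ) / ξ) (2 * π * ((m : ℝ) + 1) / ξ) ↔ ⌊y * ξ / (2 * π)⌋ = m := by
  have h2π : (0:ℝ) < 2 * π := by positivity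
  rw [Int.floor_eq_iff, Set.mem_Ico, div_le_iff₀ hξ, lt_div_iff₀ hξ, le_div_iff₀ h2π, div_lt_iff₀ h2π]
  constructor <;> rintro ⟨h1, h2⟩ <;> constructor <;> nlinarith

section aux
variable (N : ℕ) (ξ : ℝ)

/-- Half-open cube. -/
def hcube (k : Fin N → ℤ) : Set (EuclideanSpace ℝ (Fin N)) :=
  WithLp.ofLp ⁻¹' Set.univ.pi fun i => Set.Ico (2 * π * (k i : ℝ) / ξ) (2 * π * ((k i : ℝ) + 1) / ξ)

variable {N ξ}

lemma hcube_meas (k : Fin N → ℤ) : MeasurableSet (hcube N ξ k) :=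
  (MeasurableEquiv.toLp 2 (Fin N → ℝ)).symm.measurable
    (MeasurableSet.univ_pi fun _ => measurableSet_Ico)

lemma hcube_vol (hξ : 0 < ξ) (k : Fin N → ℤ) :
    (volume : Measure (EuclideanSpace ℝ (Fin N))) (hcube N ξ k)
      = ENNReal.ofReal ((2 * π / ξ) ^ N) := by
  have h := ((EuclideanSpace.volume_preserving_symm_measurableEquiv_toLp (Fin N)).symm).measure_preimage
    (hcube_meas (ξ := ξ) k).nullMeasurableSet
  have h3 : volume ((MeasurableEquiv.toLp 2 (Fin N → ℝ)).symm.symm ⁻¹' hcube N ξ k)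
      = ENNReal.ofReal ((2 * π / ξ) ^ N) := by
    rw [show ((MeasurableEquiv.toLp 2 (Fin N → ℝ)).symm.symm ⁻¹' hcube N ξ k : Set (Fin N → ℝ))
        = Set.univ.pi fun i => Set.Ico (2 * π * (k i : ℝ) / ξ) (2 * π * ((k i : ℝ) + 1) / ξ) from rfl,
      volume_pi_pi]
    have : ∀ i : Fin N, volume (Set.Ico (2 * π * (k i : ℝ) / ξ) (2 * π * ((k i : ℝ) + 1) / ξ))
        = ENNReal.ofReal (2 * π / ξ) := by
      intro i
      rw [Real.volume_Ico]
      congr 1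
      field_simp
      ring
    simp only [this, Finset.prod_const, Finset.card_univ, Fintype.card_fin]
    rw [← ENNReal.ofReal_pow (by positivity)]
  exact h.symm.trans h3

lemma hcube_disj (hξ : 0 < ξ) : Pairwise (Function.onFun Disjoint (hcube N ξ)) := by
  intro k l hkl
  rw [Function.onFun, Set.disjoint_left]
  intro x hxk hxl
  apply hkl
  funext i
  have h1 := (mem_Ico_iff_floor hξ (k i) (x i)).mp (hxk i (Set.mem_univ i))
  have h2 := (mem_Ico_iff_floor hξ (l i) (x i)).mp (hxl i (Set.mem_univ i))
  rw [← h1, ← h2]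

lemma hcube_union (hξ : 0 < ξ) : (⋃ k : Fin N → ℤ, hcube N ξ k) = Set.univ := by
  ext x
  simp only [Set.mem_iUnion, Set.mem_univ, iff_true]
  refine ⟨fun i => ⌊x i * ξ / (2 * π)⌋, fun i _ => ?_⟩
  exact (mem_Ico_iff_floor hξ _ (x i)).mpr rfl

lemma hcube_subset (k : Fin N → ℤ) : hcube N ξ k ⊆ cube N ξ k :=
  fun x hx i => Set.Ico_subset_Icc_self (hx i (Set.mem_univ i))

end aux

section cubelem
variable {N : ℕ} {ξ : ℝ}

lemma cube_convex (k : Fin N → ℤ) : Convex ℝ (cube N ξ k) := by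
  intro x hx y hy a b ha hb hab i
  exact (convex_Icc _ _) (hx i) (hy i) ha hb hab

lemma cube_compact (k : Fin N → ℤ) : IsCompact (cube N ξ k) := by
  have : cube N ξ k = (EuclideanSpace.equiv (Fin N) ℝ).toHomeomorph ⁻¹'
      (Set.univ.pi fun i => Set.Icc (2 * π * (k i : ℝ) / ξ) (2 * π * ((k i : ℝ) + 1) / ξ)) := by
    ext x
    simp only [cube, Set.mem_preimage, Set.mem_univ_pi, Set.mem_setOf_eq]
    rfl
  rw [this]
  exact (Homeomorph.isCompact_preimage _).mpr (isCompact_univ_pi fun i => isCompact_Icc)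

lemma corner_mem (hξ : 0 < ξ) (k : Fin N → ℤ) :
    ((EuclideanSpace.equiv (Fin N) ℝ).symm (fun i => 2 * π * (k i : ℝ) / ξ)) ∈ cube N ξ k := by
  intro i
  constructor
  · exact le_refl _
  · exact (div_le_div_iff_of_pos_right hξ).mpr (by nlinarith [Real.pi_pos])

lemma cube_diam (hξ : 0 < ξ) (k : Fin N → ℤ) {x y : EuclideanSpace ℝ (Fin N)}
    (hx : x ∈ cube N ξ k) (hy : y ∈ cube N ξ k) :
    ‖x - y‖ ≤ Real.sqrt N * (2 * π / ξ) := by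
  rw [EuclideanSpace.norm_eq]
  have hstep : ∀ i, ‖(x - y) i‖ ^ 2 ≤ (2 * π / ξ) ^ 2 := by
    intro i
    have hdist : |x i - y i| ≤ 2 * π / ξ := by
      have h := Real.dist_le_of_mem_Icc (hx i) (hy i)
      rw [Real.dist_eq] at h
      refine h.trans (le_of_eq ?_)
      field_simp
      ring
    have : ‖(x - y) i‖ = |x i - y i| := by
      simp [PiLp.sub_apply, Real.norm_eq_abs]
    rw [this]
    exact pow_le_pow_left₀ (abs_nonneg _) hdist 2
  calc Real.sqrt (∑ i, ‖(x - y) i‖ ^ 2) ≤ Real.sqrt (∑ _i : Fin N, (2 * π / ξ) ^ 2) :=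
        Real.sqrt_le_sqrt (Finset.sum_le_sum fun i _ => hstep i)
    _ = Real.sqrt ((N : ℝ) * (2 * π / ξ) ^ 2) := by
        rw [Finset.sum_const, Finset.card_univ, Fintype.card_fin, nsmul_eq_mul]
    _ = Real.sqrt N * (2 * π / ξ) := by
        rw [Real.sqrt_mul (Nat.cast_nonneg N), Real.sqrt_sq (by positivity)]

lemma grad_norm_eq (g : EuclideanSpace ℝ (Fin N) → ℝ) (x : EuclideanSpace ℝ (Fin N)) :
    ‖gradient g x‖ = ‖fderiv ℝ g x‖ := by
  rw [gradient]
  exact LinearIsometryEquiv.norm_map _ _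

lemma grad_cont {g : EuclideanSpace ℝ (Fin N) → ℝ} (hg : ContDiff ℝ 1 g) :
    Continuous fun x => ‖gradient g x‖ :=
  Continuous.norm ((LinearIsometryEquiv.continuous _).comp (hg.continuous_fderiv one_ne_zero))

end cubelem

theorem stmt_5 (N : ℕ) (hN : 0 < N) (ξ : ℝ) (hξ : 0 < ξ)
    (g : EuclideanSpace ℝ (Fin N) → ℝ) (hg : ContDiff ℝ 1 g) (hgint : Integrable g)
    (hsum1 : Summable (fun k : Fin N → ℤ => ⨆ x ∈ cube N ξ k, ‖gradient g x‖))
    (hsum2 : Summable (fun k : Fin N → ℤ =>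
      g ((EuclideanSpace.equiv (Fin N) ℝ).symm (fun i => 2 * π * (k i : ℝ) / ξ)))) :
    |(2 * π / ξ) ^ N * (∑' k : Fin N → ℤ,
        g ((EuclideanSpace.equiv (Fin N) ℝ).symm (fun i => 2 * π * (k i : ℝ) / ξ)))
      - ∫ x, g x|
    ≤ 2 * π * (Real.sqrt N / ξ) *
        ∑' k : Fin N → ℤ, (2 * π / ξ) ^ N * ⨆ x ∈ cube N ξ k, ‖gradient g x‖ := by
  have h2π : (0:ℝ) < 2 * π := by positivity
  have hvolpos : (0:ℝ) < (2 * π / ξ) ^ N := by positivity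
  have hbdd : ∀ k : Fin N → ℤ, BddAbove ((fun x => ‖gradient g x‖) '' cube N ξ k) :=
    fun k => (cube_compact k).bddAbove_image (grad_cont hg).continuousOn
  have houter : ∀ k : Fin N → ℤ,
      BddAbove (Set.range fun y => ⨆ _ : y ∈ cube N ξ k, ‖gradient g y‖) := by
    intro k
    obtain ⟨M, hM⟩ := hbdd k
    refine ⟨max M 0, ?_⟩
    rintro z ⟨y, rfl⟩
    simp only []
    by_cases hy : y ∈ cube N ξ k
    · rw [ciSup_pos hy]
      exact le_max_of_le_left (hM ⟨y, hy, rfl⟩)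
    · haveI : IsEmpty (y ∈ cube N ξ k) := ⟨hy⟩
      rw [iSup_of_empty', Real.sSup_empty]
      exact le_max_right _ _
  have hle : ∀ (k : Fin N → ℤ), ∀ x ∈ cube N ξ k,
      ‖gradient g x‖ ≤ ⨆ y ∈ cube N ξ k, ‖gradient g y‖ := by
    intro k x hx
    have h := le_ciSup (houter k) x
    rwa [ciSup_pos hx] at h
  have hCnonneg : ∀ k : Fin N → ℤ, 0 ≤ ⨆ y ∈ cube N ξ k, ‖gradient g y‖ :=
    fun k => le_trans (norm_nonneg _) (hle k _ (corner_mem hξ k))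
  -- per-cube estimate
  have key : ∀ k : Fin N → ℤ,
      |(2 * π / ξ) ^ N * g ((EuclideanSpace.equiv (Fin N) ℝ).symm (fun i => 2 * π * (k i : ℝ) / ξ))
        - ∫ x in hcube N ξ k, g x|
      ≤ ((2 * π / ξ) ^ N * ⨆ y ∈ cube N ξ k, ‖gradient g y‖) * (Real.sqrt N * (2 * π / ξ)) := by
    intro k
    set c := (EuclideanSpace.equiv (Fin N) ℝ).symm (fun i => 2 * π * (k i : ℝ) / ξ) with hcdef
    have hmeaslt : (volume : Measure (EuclideanSpace ℝ (Fin N))) (hcube N ξ k) < ⊤ := by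
      rw [hcube_vol hξ]; exact ENNReal.ofReal_lt_top
    have hconst : (2 * π / ξ) ^ N * g c = ∫ _x in hcube N ξ k, g c := by
      rw [setIntegral_const, measureReal_def, hcube_vol hξ, ENNReal.toReal_ofReal hvolpos.le, smul_eq_mul]
    have hsub : (∫ _x in hcube N ξ k, g c) - (∫ x in hcube N ξ k, g x)
        = ∫ x in hcube N ξ k, (g c - g x) :=
      (integral_sub (integrableOn_const (C := g c) hmeaslt.ne) hgint.integrableOn).symm
    rw [hconst, hsub]
    have hbound : ∀ x ∈ hcube N ξ k, ‖g c - g x‖ ≤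
        (⨆ y ∈ cube N ξ k, ‖gradient g y‖) * (Real.sqrt N * (2 * π / ξ)) := by
      intro x hx
      have hx' := hcube_subset k hx
      have hmvt := (cube_convex (ξ := ξ) k).norm_image_sub_le_of_norm_fderiv_le
        (fun y _hy => (hg.differentiable one_ne_zero).differentiableAt)
        (fun y hy => by rw [← grad_norm_eq]; exact hle k y hy) hx' (corner_mem hξ k)
      refine hmvt.trans ?_
      exact mul_le_mul_of_nonneg_left (cube_diam hξ k (corner_mem hξ k) hx') (hCnonneg k)
    have hn := norm_setIntegral_le_of_norm_le_const hmeaslt hbound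
    rw [measureReal_def, hcube_vol hξ, ENNReal.toReal_ofReal hvolpos.le] at hn
    calc |∫ x in hcube N ξ k, (g c - g x)| = ‖∫ x in hcube N ξ k, (g c - g x)‖ :=
          (Real.norm_eq_abs _).symm
      _ ≤ (⨆ y ∈ cube N ξ k, ‖gradient g y‖) * (Real.sqrt N * (2 * π / ξ)) * (2 * π / ξ) ^ N := hn
      _ = ((2 * π / ξ) ^ N * ⨆ y ∈ cube N ξ k, ‖gradient g y‖) * (Real.sqrt N * (2 * π / ξ)) := by
          ring
  -- the integrals over hcubes sum to the full integral
  have hS : HasSum (fun k : Fin N → ℤ => ∫ x in hcube N ξ k, g x) (∫ x, g x) := by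
    have h := hasSum_integral_iUnion (μ := (volume : Measure (EuclideanSpace ℝ (Fin N))))
      (f := g) (fun k : Fin N → ℤ => hcube_meas k) (hcube_disj hξ)
      (by rw [hcube_union hξ]; exact hgint.integrableOn)
    rwa [hcube_union hξ, Measure.restrict_univ] at h
  have ha : Summable (fun k : Fin N → ℤ =>
      (2 * π / ξ) ^ N * g ((EuclideanSpace.equiv (Fin N) ℝ).symm (fun i => 2 * π * (k i : ℝ) / ξ))) :=
    hsum2.mul_left _
  have hb : Summable (fun k : Fin N → ℤ => ∫ x in hcube N ξ k, g x) := hS.summable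
  have habs : Summable (fun k : Fin N → ℤ =>
      ((2 * π / ξ) ^ N * ⨆ y ∈ cube N ξ k, ‖gradient g y‖) * (Real.sqrt N * (2 * π / ξ))) :=
    (hsum1.mul_left _).mul_right _
  have hnorm : Summable (fun k : Fin N → ℤ =>
      |(2 * π / ξ) ^ N * g ((EuclideanSpace.equiv (Fin N) ℝ).symm (fun i => 2 * π * (k i : ℝ) / ξ))
        - ∫ x in hcube N ξ k, g x|) :=
    Summable.of_nonneg_of_le (fun k => abs_nonneg _) key habs
  rw [← hS.tsum_eq, ← tsum_mul_left, ← Summable.tsum_sub ha hb]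
  have habs_le : |∑' k : Fin N → ℤ,
      ((2 * π / ξ) ^ N * g ((EuclideanSpace.equiv (Fin N) ℝ).symm (fun i => 2 * π * (k i : ℝ) / ξ))
        - ∫ x in hcube N ξ k, g x)|
      ≤ ∑' k : Fin N → ℤ,
      |(2 * π / ξ) ^ N * g ((EuclideanSpace.equiv (Fin N) ℝ).symm (fun i => 2 * π * (k i : ℝ) / ξ))
        - ∫ x in hcube N ξ k, g x| := by
    have h := norm_tsum_le_tsum_norm (f := fun k : Fin N → ℤ =>
      (2 * π / ξ) ^ N * g ((EuclideanSpace.equiv (Fin N) ℝ).symm (fun i => 2 * π * (k i : ℝ) / ξ))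
        - ∫ x in hcube N ξ k, g x) (by simpa [Real.norm_eq_abs] using hnorm)
    simpa [Real.norm_eq_abs] using h
  refine habs_le.trans ?_
  refine (Summable.tsum_le_tsum key hnorm habs).trans (le_of_eq ?_)
  rw [tsum_mul_right]
  rw [show (2:ℝ) * π * (Real.sqrt N / ξ) = Real.sqrt N * (2 * π / ξ) by ring]
  ring
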